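/- Let W = [[β, -α], [-αᵀ, γ]] be a 2n×2n real symmetric positive definite symplectic matrix and define T₃ as the positive definite symmetric square root of W⁻¹. Then T₃ is symplectic and W = T₃⁻¹T₃⁻ᵀ = T₃⁻². -/

import Mathlib

open Matrix Polynomial

noncomputable def J (n : ℕ) : Matrix (Fin n ⊕ Fin n) (Fin n ⊕ Fin n) ℝ :=
  Matrix.fromBlocks 0 1 (-1) 0

lemma myJ_transpose (n : ℕ) : (J n)ᵀ = -(J n) := by
  unfold _root_.J
  ext (i | i) (j | j) <;> simp [fromBlocks, one_apply, eq_comm]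

lemma myJ_mul_J (n : ℕ) : J n * J n = -1 := by
  unfold _root_.J
  rw [fromBlocks_multiply]
  ext (i | i) (j | j) <;> simp [fromBlocks, one_apply, eq_comm]

theorem stmt19 {n : ℕ} (W T₃ : Matrix (Fin n ⊕ Fin n) (Fin n ⊕ Fin n) ℝ)
    (hWs : W.IsSymm) (hWpd : W.PosDef) (hWsp : Wᵀ * J n * W = J n)
    (hT₃pd : T₃.PosDef) (hT₃s : T₃.IsSymm) (hT₃sq : T₃ * T₃ = W⁻¹) :
    T₃ᵀ * J n * T₃ = J n ∧ W = T₃⁻¹ * (T₃⁻¹)ᵀ ∧ W = T₃⁻¹ * T₃⁻¹ := by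
  have hWu : IsUnit W.det := hWpd.det_pos.ne'.isUnit
  have hTu : IsUnit T₃.det := hT₃pd.det_pos.ne'.isUnit
  have hTinv_pd : (T₃⁻¹).PosDef := hT₃pd.inv
  have hJJ : J n * (J n)ᵀ = 1 := by
    rw [myJ_transpose, mul_neg, myJ_mul_J, neg_neg]
  have hWJW : W * J n * W = J n := by rwa [hWs.eq] at hWsp
  have h1 : W * J n = J n * W⁻¹ := by
    have := congrArg (· * W⁻¹) hWJW
    simpa [mul_assoc, Matrix.mul_nonsing_inv _ hWu] using this
  have hkey : (J n)ᵀ * W⁻¹ * J n = W := by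
    rw [myJ_transpose, neg_mul, neg_mul, ← h1, mul_assoc, myJ_mul_J, mul_neg_one, neg_neg]
  set A := (J n)ᵀ * T₃ * J n with hA
  have hApsd : A.PosSemidef := by
    have := hT₃pd.posSemidef.conjTranspose_mul_mul_same (J n)
    simpa [conjTranspose_eq_transpose_of_trivial] using this
  have hTinv_sq : T₃⁻¹ * T₃⁻¹ = W := by
    have : (T₃ * T₃)⁻¹ = W := by rw [hT₃sq, Matrix.nonsing_inv_nonsing_inv _ hWu]
    rwa [Matrix.mul_inv_rev] at this
  have hAsq : A * A = W := by
    rw [hA]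
    calc ((J n)ᵀ * T₃ * J n) * ((J n)ᵀ * T₃ * J n)
        = (J n)ᵀ * T₃ * (J n * (J n)ᵀ) * T₃ * J n := by noncomm_ring
      _ = W := by rw [hJJ, mul_one, mul_assoc ((J n)ᵀ) T₃ T₃, hT₃sq, hkey]
  have hAeq : A = T₃⁻¹ := by
    have h1 : A ^ 2 = W := by rw [sq, hAsq]
    have h2 : (T₃⁻¹) ^ 2 = W := by rw [sq, hTinv_sq]
    open scoped MatrixOrder in
    exact (CFC.sq_eq_sq_iff A (T₃⁻¹) hApsd.nonneg hTinv_pd.posSemidef.nonneg).1 (h1.trans h2.symm)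
  have hTinv_s : (T₃⁻¹)ᵀ = T₃⁻¹ := by rw [Matrix.transpose_nonsing_inv, hT₃s.eq]
  refine ⟨?_, ?_, hTinv_sq.symm⟩
  · have h3 : T₃ * J n = J n * T₃⁻¹ := by
      have h := hAeq
      rw [hA] at h
      calc T₃ * J n = J n * ((J n)ᵀ * T₃ * J n) := by
            rw [← mul_assoc, ← mul_assoc, hJJ, one_mul]
        _ = J n * T₃⁻¹ := by rw [h]
    rw [hT₃s.eq, h3, mul_assoc, Matrix.nonsing_inv_mul _ hTu, mul_one]
  · rw [hTinv_s, hTinv_sq]
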